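/- Let G be a graph and x ∈ Δ_n with support S, and let C_1, …, C_k be the connected components of the induced subgraph G[S]. Then x is a global minimizer of f_G(y) = y^T(I + A_G)y over Δ_n if and only if k = α(G), each C_h is a clique of G, and Σ_{i ∈ C_h} x_i = 1/k for all h ∈ [k]. -/

import Mathlib

open Matrix Finset
open scoped Classical

def IsStable {n : ℕ} (G : SimpleGraph (Fin n)) (S : Finset (Fin n)) : Prop :=
  ∀ i ∈ S, ∀ j ∈ S, ¬ G.Adj i j

noncomputable def alpha {n : ℕ} (G : SimpleGraph (Fin n)) : ℕ :=
  sSup {k | ∃ S : Finset (Fin n), IsStable G S ∧ S.card = k}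

noncomputable def indic {n : ℕ} (S : Finset (Fin n)) : Fin n → ℝ :=
  fun i => if i ∈ S then 1 else 0

noncomputable def qform {n : ℕ} (M : Matrix (Fin n) (Fin n) ℝ) (x : Fin n → ℝ) : ℝ :=
  x ⬝ᵥ M.mulVec x

noncomputable def fG {n : ℕ} (G : SimpleGraph (Fin n)) (x : Fin n → ℝ) : ℝ :=
  qform (1 + G.adjMatrix ℝ) x

noncomputable def globMin {n : ℕ} (f : (Fin n → ℝ) → ℝ) : Set (Fin n → ℝ) :=
  {x | x ∈ stdSimplex ℝ (Fin n) ∧ ∀ y ∈ stdSimplex ℝ (Fin n), f x ≤ f y}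

variable {n : ℕ} (G : SimpleGraph (Fin n))


lemma bil_comm (x y : Fin n → ℝ) :
    x ⬝ᵥ (1 + G.adjMatrix ℝ).mulVec y = y ⬝ᵥ (1 + G.adjMatrix ℝ).mulVec x := by
  have hsymm : (1 + G.adjMatrix ℝ)ᵀ = 1 + G.adjMatrix ℝ := by
    rw [Matrix.transpose_add, Matrix.transpose_one, (G.isSymm_adjMatrix (α := ℝ)).eq]
  rw [Matrix.dotProduct_mulVec, ← Matrix.mulVec_transpose, hsymm, dotProduct_comm]

lemma fG_expand (x d : Fin n → ℝ) (t : ℝ) :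
    fG G (x + t • d) = fG G x + 2*t*(d ⬝ᵥ (1 + G.adjMatrix ℝ).mulVec x) + t^2 * fG G d := by
  simp only [fG, qform, Matrix.mulVec_add, Matrix.mulVec_smul, dotProduct_add,
    add_dotProduct, smul_dotProduct, dotProduct_smul, smul_eq_mul]
  rw [bil_comm G x d]
  ring

lemma M_apply (i j : Fin n) :
    (1 + G.adjMatrix ℝ) i j = (if i = j then (1:ℝ) else 0) + (if G.Adj i j then 1 else 0) := by
  simp [Matrix.add_apply, Matrix.one_apply]

lemma fG_double (x : Fin n → ℝ) :
    fG G x = ∑ i, ∑ j, x i * ((1 + G.adjMatrix ℝ) i j * x j) := by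
  simp [fG, qform, dotProduct, Matrix.mulVec, Finset.mul_sum]

lemma grad_single (i j : Fin n) (v : Fin n → ℝ) :
    (Pi.single i (1:ℝ) - Pi.single j 1) ⬝ᵥ v = v i - v j := by
  simp [sub_dotProduct, single_dotProduct]

lemma fG_dir (i j : Fin n) (hij : i ≠ j) :
    fG G (Pi.single i (1:ℝ) - Pi.single j 1) = 2 - 2 * (if G.Adj i j then (1:ℝ) else 0) := by
  simp only [fG, qform, Matrix.mulVec_sub, Matrix.mulVec_single, sub_dotProduct,
    dotProduct_sub, single_dotProduct, mul_one, Pi.sub_apply, Pi.smul_apply, op_smul_eq_mul,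
    Matrix.col_apply]
  rw [M_apply, M_apply, M_apply, M_apply]
  simp only [if_pos rfl, if_neg hij, if_neg hij.symm, if_neg (G.irrefl (v := i)),
    if_neg (G.irrefl (v := j)), G.adj_comm j i, if_true]
  ring

lemma perturb_mem (x : Fin n → ℝ) (hx : x ∈ stdSimplex ℝ (Fin n)) (i j : Fin n) (hij : i ≠ j)
    (t : ℝ) (ht0 : 0 ≤ t) (ht : t ≤ x j) :
    x + t • (Pi.single i (1:ℝ) - Pi.single j 1) ∈ stdSimplex ℝ (Fin n) := by
  constructor
  · intro l
    have hl := hx.1 l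
    simp only [Pi.add_apply, Pi.smul_apply, Pi.sub_apply, smul_eq_mul, Pi.single_apply]
    rcases eq_or_ne l i with rfl | hli
    · rw [if_pos rfl, if_neg hij]
      nlinarith
    rcases eq_or_ne l j with rfl | hlj
    · rw [if_neg hli, if_pos rfl]
      linarith
    · rw [if_neg hli, if_neg hlj]
      linarith
  · simp only [Pi.add_apply, Pi.smul_apply, Pi.sub_apply, smul_eq_mul]
    rw [Finset.sum_add_distrib, hx.2, ← Finset.mul_sum]
    simp [Pi.single_apply, Finset.sum_sub_distrib]

lemma grad_le (x : Fin n → ℝ) (hx : x ∈ globMin (fG G)) (i : Fin n) (hi : x i ≠ 0) (j : Fin n) :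
    ((1 + G.adjMatrix ℝ).mulVec x) i ≤ ((1 + G.adjMatrix ℝ).mulVec x) j := by
  rcases eq_or_ne i j with rfl | hij
  · exact le_refl _
  have hxi : 0 < x i := lt_of_le_of_ne (hx.1.1 i) (Ne.symm hi)
  set g := (1 + G.adjMatrix ℝ).mulVec x with hg
  set c := fG G (Pi.single j (1:ℝ) - Pi.single i 1) with hc
  have key : ∀ t : ℝ, 0 < t → t ≤ x i → 0 ≤ 2*t*(g j - g i) + t^2 * c := by
    intro t ht0 ht
    have hmem := perturb_mem x hx.1 j i (Ne.symm hij) t ht0.le ht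
    have := hx.2 _ hmem
    rw [fG_expand] at this
    rw [grad_single] at this
    linarith
  by_contra hlt
  push_neg at hlt
  set ε := g i - g j with hε
  have hε0 : 0 < ε := by simp [hε]; linarith
  set t := min (x i) (ε / (max c 1)) with htdef
  have hmax : (0:ℝ) < max c 1 := lt_of_lt_of_le one_pos (le_max_right c 1)
  have ht0 : 0 < t := lt_min hxi (div_pos hε0 hmax)
  have h1 : t * max c 1 ≤ ε := by
    rw [← le_div_iff₀ hmax]; exact min_le_right _ _
  have h2 : t * c ≤ t * max c 1 := by
    apply mul_le_mul_of_nonneg_left (le_max_left c 1) ht0.le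
  have := key t ht0 (min_le_left _ _)
  nlinarith

lemma alpha_bdd : BddAbove {k | ∃ S : Finset (Fin n), IsStable G S ∧ S.card = k} := by
  refine ⟨n, fun m hm => ?_⟩
  obtain ⟨T, _, rfl⟩ := hm
  simpa using T.card_le_univ

lemma card_le_alpha (T : Finset (Fin n)) (hT : IsStable G T) : T.card ≤ alpha G :=
  le_csSup (alpha_bdd G) ⟨T, hT, rfl⟩

lemma exists_alpha_stable : ∃ T : Finset (Fin n), IsStable G T ∧ T.card = alpha G := by
  have hne : {k | ∃ S : Finset (Fin n), IsStable G S ∧ S.card = k}.Nonempty := by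
    refine ⟨0, ∅, fun i hi => by simp at hi, Finset.card_empty⟩
  exact Nat.sSup_mem hne (alpha_bdd G)

lemma fG_of_stable_support (z : Fin n → ℝ)
    (hz : ∀ i j, z i ≠ 0 → z j ≠ 0 → ¬ G.Adj i j) :
    fG G z = ∑ i, (z i)^2 := by
  rw [fG_double]
  refine Finset.sum_congr rfl fun i _ => ?_
  rw [Finset.sum_eq_single i]
  · rw [M_apply, if_pos rfl, if_neg (G.irrefl)]; ring
  · intro j _ hji
    rw [M_apply, if_neg (Ne.symm hji)]
    rcases eq_or_ne (z i) 0 with h | h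
    · rw [h]; ring
    rcases eq_or_ne (z j) 0 with h' | h'
    · rw [h']; ring
    · rw [if_neg (hz i j h h')]; ring
  · intro h; exact absurd (Finset.mem_univ i) h

lemma uniform_mem (T : Finset (Fin n)) (hc : T.Nonempty) :
    (fun i => if i ∈ T then (1:ℝ)/T.card else 0) ∈ stdSimplex ℝ (Fin n) := by
  have hcard : (0:ℝ) < T.card := by exact_mod_cast hc.card_pos
  constructor
  · intro i; dsimp only; split_ifs
    · positivity
    · exact le_refl 0
  · simp only [Finset.sum_ite_mem, Finset.univ_inter, Finset.sum_const, nsmul_eq_mul]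
    field_simp

lemma fG_uniform (T : Finset (Fin n)) (hT : IsStable G T) (hc : T.Nonempty) :
    fG G (fun i => if i ∈ T then (1:ℝ)/T.card else 0) = 1 / T.card := by
  have hcard : (0:ℝ) < T.card := by exact_mod_cast hc.card_pos
  rw [fG_of_stable_support]
  · have heq : ∀ i : Fin n, ((if i ∈ T then (1:ℝ)/T.card else 0))^2
        = if i ∈ T then ((1:ℝ)/T.card)^2 else 0 := by
      intro i; split_ifs with h
      · rfl
      · exact zero_pow two_ne_zero
    simp only [heq]
    rw [Finset.sum_ite_mem, Finset.univ_inter, Finset.sum_const, nsmul_eq_mul]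
    field_simp
  · intro i j hi hj
    apply hT <;> simp_all only [ne_eq, ite_eq_right_iff, not_forall] <;> tauto

lemma fG_continuous : Continuous (fG G) := by
  have : fG G = fun x => ∑ i, ∑ j, x i * ((1 + G.adjMatrix ℝ) i j * x j) := by
    funext x; exact fG_double G x
  rw [this]
  refine continuous_finset_sum _ fun i _ => continuous_finset_sum _ fun j _ => ?_
  exact (continuous_apply i).mul (continuous_const.mul (continuous_apply j))

lemma exists_globMin (y : Fin n → ℝ) (hy : y ∈ stdSimplex ℝ (Fin n)) :
    ∃ z, z ∈ globMin (fG G) := by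
  obtain ⟨z, hz, hmin⟩ := (isCompact_stdSimplex ℝ (Fin n)).exists_isMinOn ⟨y, hy⟩
    (fG_continuous G).continuousOn
  exact ⟨z, hz, fun w hw => hmin hw⟩

lemma supp_sum_one (z : Fin n → ℝ) (hz : z ∈ stdSimplex ℝ (Fin n)) :
    ∑ i ∈ Finset.univ.filter (fun i => z i ≠ 0), z i = 1 := by
  rw [← hz.2]
  exact Finset.sum_filter_of_ne fun i _ h => h
  
lemma MS_bound (y : Fin n → ℝ) (hy : y ∈ stdSimplex ℝ (Fin n)) :
    1 / (alpha G : ℝ) ≤ fG G y := by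
  classical
  set Ns : Set ℕ := {c | ∃ z ∈ globMin (fG G), (Finset.univ.filter (fun i => z i ≠ 0)).card = c}
    with hNs
  obtain ⟨z₁, hz₁⟩ := exists_globMin G y hy
  have hNe : Ns.Nonempty := ⟨_, z₁, hz₁, rfl⟩
  obtain ⟨z, hz, hcard⟩ := Nat.sInf_mem hNe
  set U := Finset.univ.filter (fun i => z i ≠ 0) with hU
  -- U is stable
  have hstab : IsStable G U := by
    intro i hi j hj hadj
    have hij : i ≠ j := hadj.ne
    have hzi : 0 < z i := lt_of_le_of_ne (hz.1.1 i) (Ne.symm (Finset.mem_filter.mp hi).2)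
    have hzj : 0 < z j := lt_of_le_of_ne (hz.1.1 j) (Ne.symm (Finset.mem_filter.mp hj).2)
    have hg : ((1 + G.adjMatrix ℝ).mulVec z) i = ((1 + G.adjMatrix ℝ).mulVec z) j :=
      le_antisymm (grad_le G z hz i hzi.ne' j) (grad_le G z hz j hzj.ne' i)
    set y' := z + (z j) • (Pi.single i (1:ℝ) - Pi.single j 1) with hy'
    have hy'mem : y' ∈ stdSimplex ℝ (Fin n) := perturb_mem z hz.1 i j hij (z j) hzj.le le_rfl
    have hfy' : fG G y' = fG G z := by
      rw [hy', fG_expand, grad_single, hg, fG_dir G i j hij, if_pos hadj]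
      ring
    have hy'min : y' ∈ globMin (fG G) := ⟨hy'mem, fun w hw => hfy' ▸ hz.2 w hw⟩
    have hsub : Finset.univ.filter (fun l => y' l ≠ 0) ⊆ U.erase j := by
      intro l hl
      rw [Finset.mem_filter] at hl
      rcases eq_or_ne l j with rfl | hlj
      · exfalso; apply hl.2
        simp [hy', Pi.single_eq_same, Pi.single_eq_of_ne (Ne.symm hij)]
      · rw [Finset.mem_erase]
        refine ⟨hlj, Finset.mem_filter.mpr ⟨Finset.mem_univ l, ?_⟩⟩
        rcases eq_or_ne l i with rfl | hli
        · have : y' l = z l + z j := by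
            simp [hy', Pi.single_eq_same, Pi.single_eq_of_ne hij]
          rw [this] at *; positivity
        · have : y' l = z l := by
            simp [hy', Pi.single_eq_of_ne hli, Pi.single_eq_of_ne hlj]
          rw [← this]; exact hl.2
    have hlt : (Finset.univ.filter (fun l => y' l ≠ 0)).card < U.card := by
      calc _ ≤ (U.erase j).card := Finset.card_le_card hsub
        _ < U.card := Finset.card_erase_lt_of_mem hj
    have : sInf Ns ≤ (Finset.univ.filter (fun l => y' l ≠ 0)).card :=
      Nat.sInf_le ⟨y', hy'min, rfl⟩
    omega
  -- conclude
  have hfz : fG G z = ∑ i, (z i)^2 := by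
    apply fG_of_stable_support
    intro i j hi hj
    exact hstab i (Finset.mem_filter.mpr ⟨Finset.mem_univ i, hi⟩)
      j (Finset.mem_filter.mpr ⟨Finset.mem_univ j, hj⟩)
  have hsum1 : ∑ i ∈ U, z i = 1 := supp_sum_one z hz.1
  have hUne : U.Nonempty := by
    by_contra h
    rw [Finset.not_nonempty_iff_eq_empty] at h
    rw [h] at hsum1; simp at hsum1
  have hUcard : (0:ℝ) < U.card := by exact_mod_cast hUne.card_pos
  have hCS : (1:ℝ) ≤ U.card * ∑ i ∈ U, (z i)^2 := by
    have := sq_sum_le_card_mul_sum_sq (s := U) (f := z)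
    rw [hsum1] at this
    simpa using this
  have hsq : ∑ i ∈ U, (z i)^2 = ∑ i, (z i)^2 := by
    apply Finset.sum_subset (Finset.subset_univ U)
    intro i _ hi
    rw [Finset.mem_filter] at hi
    push_neg at hi
    rw [hi (Finset.mem_univ i)]; ring
  have halpha : (U.card : ℝ) ≤ (alpha G : ℝ) := by
    exact_mod_cast card_le_alpha G U hstab
  have halpha0 : (0:ℝ) < alpha G := lt_of_lt_of_le hUcard halpha
  have h1 : 1 / (alpha G : ℝ) ≤ 1 / (U.card : ℝ) := by
    apply one_div_le_one_div_of_le hUcard halpha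
  have h2 : 1 / (U.card : ℝ) ≤ fG G z := by
    rw [hfz, ← hsq, div_le_iff₀ hUcard]
    nlinarith
  exact le_trans (le_trans h1 h2) (hz.2 y hy)

lemma triple_dot (a b c : Fin n) (v : Fin n → ℝ) :
    (Pi.single a (1:ℝ) + Pi.single c 1 - Pi.single b 2) ⬝ᵥ v = v a + v c - 2 * v b := by
  simp [sub_dotProduct, add_dotProduct, single_dotProduct]
  try ring

lemma triple_qform (a b c : Fin n) (hab : G.Adj a b) (hbc : G.Adj b c) (hac : ¬ G.Adj a c)
    (hane : a ≠ c) :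
    fG G (Pi.single a (1:ℝ) + Pi.single c 1 - Pi.single b 2) = -2 := by
  have hba := hab.symm
  have hcb := hbc.symm
  have hca : ¬ G.Adj c a := fun hh => hac hh.symm
  simp only [fG, qform, Matrix.mulVec_sub, Matrix.mulVec_add, Matrix.mulVec_single,
    sub_dotProduct, add_dotProduct, dotProduct_sub, dotProduct_add,
    single_dotProduct, one_mul, Pi.sub_apply, Pi.add_apply, Pi.smul_apply, op_smul_eq_mul,
    Matrix.col_apply]
  rw [M_apply, M_apply, M_apply, M_apply, M_apply, M_apply, M_apply, M_apply, M_apply]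
  simp only [if_pos rfl, if_pos hab, if_pos hbc, if_pos hba, if_pos hcb, if_neg hac, if_neg hca,
    if_neg hane, if_neg (Ne.symm hane), if_neg hab.ne, if_neg hab.ne', if_neg hbc.ne,
    if_neg hbc.ne', if_neg (G.irrefl (v := a)), if_neg (G.irrefl (v := b)),
    if_neg (G.irrefl (v := c)), if_true]
  ring

lemma triple_contradiction (x : Fin n → ℝ) (hx : x ∈ globMin (fG G)) (a b c : Fin n)
    (hab : G.Adj a b) (hbc : G.Adj b c) (hac : ¬ G.Adj a c) (hane : a ≠ c)
    (ha : x a ≠ 0) (hb : x b ≠ 0) (hc : x c ≠ 0) : False := by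
  set g := (1 + G.adjMatrix ℝ).mulVec x with hg
  have hga : g a = g b := le_antisymm (grad_le G x hx a ha b) (grad_le G x hx b hb a)
  have hgc : g c = g b := le_antisymm (grad_le G x hx c hc b) (grad_le G x hx b hb c)
  set d : Fin n → ℝ := Pi.single a (1:ℝ) + Pi.single c 1 - Pi.single b 2 with hd
  have hxb : 0 < x b := lt_of_le_of_ne (hx.1.1 b) (Ne.symm hb)
  set t := x b / 2 with ht
  have ht0 : 0 < t := by positivity
  have hmem : x + t • d ∈ stdSimplex ℝ (Fin n) := by
    constructor
    · intro l
      simp only [Pi.add_apply, Pi.smul_apply, Pi.sub_apply, smul_eq_mul, hd, Pi.single_apply]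
      rcases eq_or_ne l a with rfl | hla
      · rw [if_pos rfl, if_neg hane, if_neg hab.ne]
        have := hx.1.1 l; linarith
      rcases eq_or_ne l b with rfl | hlb
      · rw [if_neg hab.ne', if_neg hbc.ne, if_pos rfl]
        linarith
      rcases eq_or_ne l c with rfl | hlc
      · rw [if_neg (Ne.symm hane), if_pos rfl, if_neg hbc.ne']
        have := hx.1.1 l; linarith
      · rw [if_neg hla, if_neg hlc, if_neg hlb]
        have := hx.1.1 l; linarith
    · simp only [Pi.add_apply, Pi.smul_apply, Pi.sub_apply, smul_eq_mul, hd, Pi.single_apply]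
      rw [Finset.sum_add_distrib, hx.1.2]
      have : ∀ l : Fin n, t * ((if l = a then (1:ℝ) else 0) + (if l = c then (1:ℝ) else 0)
          - (if l = b then (2:ℝ) else 0)) = (if l = a then t else 0) + (if l = c then t else 0)
          - (if l = b then 2*t else 0) := by
        intro l; split_ifs <;> ring
      rw [Finset.sum_congr rfl (fun l _ => this l)]
      simp only [Finset.sum_sub_distrib, Finset.sum_add_distrib, Finset.sum_ite_eq',
        Finset.mem_univ, if_true]
      ring
  have hle := hx.2 _ hmem
  rw [fG_expand, triple_dot, ← hg, hga, hgc, triple_qform G a b c hab hbc hac hane] at hle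
  nlinarith

lemma grad_on_clique (x : Fin n → ℝ) (S : Finset (Fin n)) (hsupp : ∀ i, i ∈ S ↔ x i ≠ 0)
    {k : ℕ} (C : Fin k → Finset (Fin n)) (hcover : ∀ i, i ∈ S ↔ ∃ h, i ∈ C h)
    (hdisj : ∀ h h', h ≠ h' → Disjoint (C h) (C h'))
    (hsep : ∀ h h', h ≠ h' → ∀ i ∈ C h, ∀ j ∈ C h', ¬ G.Adj i j)
    (hclique : ∀ h, G.IsClique (↑(C h) : Set (Fin n)))
    (h : Fin k) (i : Fin n) (hi : i ∈ C h) :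
    ((1 + G.adjMatrix ℝ).mulVec x) i = ∑ j ∈ C h, x j := by
  have key : ∀ j : Fin n, (1 + G.adjMatrix ℝ) i j * x j = if j ∈ C h then x j else 0 := by
    intro j
    rw [M_apply]
    by_cases hj : j ∈ C h
    · rw [if_pos hj]
      rcases eq_or_ne i j with rfl | hij
      · rw [if_pos rfl, if_neg (G.irrefl)]; ring
      · rw [if_neg hij, if_pos (hclique h hi hj hij)]; ring
    · rw [if_neg hj]
      rcases eq_or_ne (x j) 0 with hxj | hxj
      · rw [hxj]; ring
      · obtain ⟨h', hjh'⟩ := (hcover j).mp ((hsupp j).mpr hxj)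
        have hhh : h ≠ h' := by rintro rfl; exact hj hjh'
        have hij : i ≠ j := by
          rintro rfl; exact (Finset.disjoint_left.mp (hdisj h h' hhh) hi) hjh'
        rw [if_neg hij, if_neg (hsep h h' hhh i hi j hjh')]; ring
  rw [Matrix.mulVec, dotProduct]
  rw [Finset.sum_congr rfl (fun j _ => key j)]
  rw [Finset.sum_ite_mem, Finset.univ_inter]

lemma sum_over_S (x : Fin n → ℝ) (S : Finset (Fin n)) (hx : x ∈ stdSimplex ℝ (Fin n))
    (hsupp : ∀ i, i ∈ S ↔ x i ≠ 0) : ∑ i ∈ S, x i = 1 := by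
  rw [← hx.2]
  apply Finset.sum_subset (Finset.subset_univ S)
  intro i _ hi
  by_contra hne
  exact hi ((hsupp i).mpr hne)

lemma sum_comp (S : Finset (Fin n)) {k : ℕ} (C : Fin k → Finset (Fin n))
    (hcover : ∀ i, i ∈ S ↔ ∃ h, i ∈ C h)
    (hdisj : ∀ h h', h ≠ h' → Disjoint (C h) (C h')) (f : Fin n → ℝ) :
    ∑ i ∈ S, f i = ∑ h, ∑ i ∈ C h, f i := by
  have hS : S = Finset.univ.biUnion C := by
    ext i
    rw [Finset.mem_biUnion]
    constructor
    · intro hi; obtain ⟨h, hh⟩ := (hcover i).mp hi; exact ⟨h, Finset.mem_univ h, hh⟩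
    · intro ⟨h, _, hh⟩; exact (hcover i).mpr ⟨h, hh⟩
  rw [hS]
  exact Finset.sum_biUnion fun h _ h' _ hne => hdisj h h' hne


lemma walk_triple {V : Type*} (H : SimpleGraph V) {u v : V} (W : H.Walk u v)
    (hadj : ¬ H.Adj u v) (hne : u ≠ v) :
    ∃ a b c, H.Adj a b ∧ H.Adj b c ∧ ¬ H.Adj a c ∧ a ≠ c := by
  induction W with
  | nil => exact absurd rfl hne
  | @cons u w v h p ih =>
    by_cases hwv : w = v
    · subst hwv; exact absurd h hadj
    by_cases haw : H.Adj w v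
    · exact ⟨u, w, v, h, haw, hadj, hne⟩
    · exact ih haw hwv

lemma clique_of_connected {n : ℕ} (G : SimpleGraph (Fin n)) (D : Finset (Fin n))
    (hconn : (G.induce (↑D : Set (Fin n))).Connected)
    (htri : ∀ a b c : Fin n, a ∈ D → b ∈ D → c ∈ D →
      G.Adj a b → G.Adj b c → ¬ G.Adj a c → a ≠ c → False) :
    G.IsClique (↑D : Set (Fin n)) := by
  intro a ha b hb hab
  by_contra hnadj
  have ha' : a ∈ D := ha
  have hb' : b ∈ D := hb
  obtain ⟨W⟩ := hconn.preconnected ⟨a, ha⟩ ⟨b, hb⟩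
  have hne' : (⟨a, ha⟩ : ↥(↑D : Set (Fin n))) ≠ ⟨b, hb⟩ := by
    simp [Subtype.ext_iff, hab]
  have hnadj' : ¬ (G.induce (↑D : Set (Fin n))).Adj ⟨a, ha⟩ ⟨b, hb⟩ := by
    simp only [SimpleGraph.comap_adj, Function.Embedding.coe_subtype]
    exact hnadj
  obtain ⟨p, q, r, hpq, hqr, hpr, hprne⟩ := walk_triple _ W hnadj' hne'
  exact htri p q r p.2 q.2 r.2 hpq hqr (by simpa using hpr)
    (fun hh => hprne (Subtype.ext hh)) 


lemma fG_value (x : Fin n → ℝ) (hx : x ∈ stdSimplex ℝ (Fin n)) (S : Finset (Fin n))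
    (hsupp : ∀ i, i ∈ S ↔ x i ≠ 0)
    {k : ℕ} (C : Fin k → Finset (Fin n)) (hcover : ∀ i, i ∈ S ↔ ∃ h, i ∈ C h)
    (hdisj : ∀ h h', h ≠ h' → Disjoint (C h) (C h'))
    (hsep : ∀ h h', h ≠ h' → ∀ i ∈ C h, ∀ j ∈ C h', ¬ G.Adj i j)
    (hclique : ∀ h, G.IsClique (↑(C h) : Set (Fin n)))
    (w : ℝ) (hw : ∀ h, ∑ i ∈ C h, x i = w) :
    fG G x = w := by
  have h1 : fG G x = ∑ i, x i * ((1 + G.adjMatrix ℝ).mulVec x) i := rfl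
  rw [h1]
  rw [← Finset.sum_subset (Finset.subset_univ S) (fun i _ hi => by
    have : x i = 0 := by by_contra hne; exact hi ((hsupp i).mpr hne)
    rw [this, zero_mul])]
  have h2 : ∀ i ∈ S, x i * ((1 + G.adjMatrix ℝ).mulVec x) i = x i * w := by
    intro i hi
    obtain ⟨h, hh⟩ := (hcover i).mp hi
    rw [grad_on_clique G x S hsupp C hcover hdisj hsep hclique h i hh, hw h]
  rw [Finset.sum_congr rfl h2, ← Finset.sum_mul, sum_over_S x S hx hsupp, one_mul]

theorem stmt_5 (n k : ℕ) (G : SimpleGraph (Fin n)) (x : Fin n → ℝ)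
    (hx : x ∈ stdSimplex ℝ (Fin n)) (S : Finset (Fin n))
    (hsupp : ∀ i, i ∈ S ↔ x i ≠ 0)
    (C : Fin k → Finset (Fin n))
    (hne : ∀ h, (C h).Nonempty)
    (hcover : ∀ i, i ∈ S ↔ ∃ h, i ∈ C h)
    (hdisj : ∀ h h', h ≠ h' → Disjoint (C h) (C h'))
    (hconn : ∀ h, (G.induce (↑(C h) : Set (Fin n))).Connected)
    (hsep : ∀ h h', h ≠ h' → ∀ i ∈ C h, ∀ j ∈ C h', ¬ G.Adj i j) :
    x ∈ globMin (fG G) ↔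
      (k = alpha G ∧ (∀ h, G.IsClique (↑(C h) : Set (Fin n))) ∧
        ∀ h, ∑ i ∈ C h, x i = 1 / (k : ℝ)) := by

  have hSne : S.Nonempty := by
    by_contra hS
    rw [Finset.not_nonempty_iff_eq_empty] at hS
    have hzero : ∑ i, x i = 0 := Finset.sum_eq_zero fun i _ => by
      by_contra h
      have := (hsupp i).mpr h
      rw [hS] at this; simp at this
    rw [hx.2] at hzero; norm_num at hzero
  obtain ⟨i₀, hi₀⟩ := hSne
  obtain ⟨h₀, -⟩ := (hcover i₀).mp hi₀
  have hk0 : 0 < k := h₀.pos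
  have hk0' : (0:ℝ) < k := by exact_mod_cast hk0
  have hkalpha : k ≤ alpha G := by
    have hrmem : ∀ h, (hne h).choose ∈ C h := fun h => (hne h).choose_spec
    set r : Fin k → Fin n := fun h => (hne h).choose with hr
    have hrinj : Function.Injective r := by
      intro h h' hEq
      by_contra hne'
      have h1 : r h ∈ C h' := by rw [hEq]; exact hrmem h'
      exact (Finset.disjoint_left.mp (hdisj h h' hne') (hrmem h)) h1
    have hstab : IsStable G (Finset.univ.image r) := by
      intro i hi j hj hadj
      obtain ⟨h, -, rfl⟩ := Finset.mem_image.mp hi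
      obtain ⟨h', -, rfl⟩ := Finset.mem_image.mp hj
      rcases eq_or_ne h h' with rfl | hhh
      · exact G.irrefl hadj
      · exact hsep h h' hhh _ (hrmem h) _ (hrmem h') hadj
    calc k = (Finset.univ.image r).card := by
          rw [Finset.card_image_of_injective _ hrinj, Finset.card_univ, Fintype.card_fin]
      _ ≤ alpha G := card_le_alpha G _ hstab
  have halpha0 : 0 < alpha G := lt_of_lt_of_le hk0 hkalpha
  have halpha0' : (0:ℝ) < (alpha G : ℝ) := by exact_mod_cast halpha0
  constructor
  · intro hmin
    have hclique : ∀ h, G.IsClique (↑(C h) : Set (Fin n)) := by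
      intro h
      apply clique_of_connected G (C h) (hconn h)
      intro a b c ha hb hc hab hbc hac hane
      have hmem : ∀ l, l ∈ C h → x l ≠ 0 := fun l hl => (hsupp l).mp ((hcover l).mpr ⟨h, hl⟩)
      exact triple_contradiction G x hmin a b c hab hbc hac hane
        (hmem a ha) (hmem b hb) (hmem c hc)
    have hgeq : ∀ i ∈ S, ∀ j ∈ S,
        ((1 + G.adjMatrix ℝ).mulVec x) i = ((1 + G.adjMatrix ℝ).mulVec x) j := fun i hi j hj =>
      le_antisymm (grad_le G x hmin i ((hsupp i).mp hi) j)
        (grad_le G x hmin j ((hsupp j).mp hj) i)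
    have hmemS : ∀ h : Fin k, (hne h).choose ∈ S := fun h =>
      (hcover _).mpr ⟨h, (hne h).choose_spec⟩
    have hsh : ∀ h h' : Fin k, ∑ i ∈ C h, x i = ∑ i ∈ C h', x i := by
      intro h h'
      rw [← grad_on_clique G x S hsupp C hcover hdisj hsep hclique h _ (hne h).choose_spec,
        ← grad_on_clique G x S hsupp C hcover hdisj hsep hclique h' _ (hne h').choose_spec]
      exact hgeq _ (hmemS h) _ (hmemS h')
    have hsum : ∑ h : Fin k, ∑ i ∈ C h, x i = 1 := by
      rw [← sum_comp S C hcover hdisj]; exact sum_over_S x S hx hsupp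
    have hw : ∀ h, ∑ i ∈ C h, x i = 1 / (k:ℝ) := by
      intro h
      have hk : ∑ h' : Fin k, ∑ i ∈ C h', x i = k * ∑ i ∈ C h, x i := by
        rw [Finset.sum_congr rfl (fun h' _ => hsh h' h), Finset.sum_const, Finset.card_univ,
          Fintype.card_fin, nsmul_eq_mul]
      rw [hsum] at hk
      field_simp
      linarith
    have hfx : fG G x = 1 / (k:ℝ) :=
      fG_value G x hx S hsupp C hcover hdisj hsep hclique _ hw
    obtain ⟨T, hT, hTcard⟩ := exists_alpha_stable G
    have hTne : T.Nonempty := by rw [← Finset.card_pos, hTcard]; exact halpha0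
    have hle := hmin.2 _ (uniform_mem T hTne)
    rw [fG_uniform G T hT hTne, hfx, hTcard] at hle
    have hak : (alpha G : ℝ) ≤ (k : ℝ) := by
      rw [div_le_div_iff₀ hk0' halpha0'] at hle
      linarith
    exact ⟨le_antisymm hkalpha (by exact_mod_cast hak), hclique, hw⟩
  · rintro ⟨hkal, hclique, hw⟩
    refine ⟨hx, fun y hy => ?_⟩
    have hfx : fG G x = 1 / (k:ℝ) :=
      fG_value G x hx S hsupp C hcover hdisj hsep hclique _ hw
    rw [hfx, hkal]
    exact MS_bound G y hy
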